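/- Let ρ > 0 and suppose x satisfies v(x) = 0 and Δl(d*(ρ,x);ρ,x) = 0, where d*(ρ,x) minimizes l(·;ρ,x) over the trust region X = {d : ‖d‖ ≤ δ}, δ > 0. Then x is a KKT point for the nonlinear program min f(x) s.t. c_i(x)=0 (i∈E), c_i(x)≤0 (i∈I), with Lagrange multipliers λ_i/ρ for some λ_i ∈ ∂v_i(c_i(x)). -/

import Mathlib

open Finset

/-- Clarke subdifferential of `|·|` at `z`. -/
noncomputable def subAbs (z : ℝ) : Set ℝ :=
  if 0 < z then {1} else if z < 0 then {-1} else Set.Icc (-1) 1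

/-- Clarke subdifferential of `max(·,0)` at `z`. -/
noncomputable def subPos (z : ℝ) : Set ℝ :=
  if 0 < z then {1} else if z < 0 then {0} else Set.Icc 0 1

theorem stmt3 {n : ℕ} {ι : Type*} [DecidableEq ι] (E I : Finset ι) (hEI : Disjoint E I)
    (f : EuclideanSpace ℝ (Fin n) → ℝ) (c : ι → EuclideanSpace ℝ (Fin n) → ℝ)
    (hf : ContDiff ℝ 1 f) (hc : ∀ i ∈ E ∪ I, ContDiff ℝ 1 (c i))
    (x : EuclideanSpace ℝ (Fin n)) (ρ δ : ℝ) (hρ : 0 < ρ) (hδ : 0 < δ)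
    -- a norm ‖·‖ on ℝⁿ defining the trust region X = {d : ‖d‖ ≤ δ}
    (N : EuclideanSpace ℝ (Fin n) → ℝ)
    (hNadd : ∀ y z, N (y + z) ≤ N y + N z)
    (hNsmul : ∀ (t : ℝ) y, N (t • y) = |t| * N y)
    (hNpos : ∀ y, 0 ≤ N y)
    -- the linearized model l(d;ρ,x) = ρ⟨∇f(x),d⟩ + ∑_i v_i(c_i(x)+⟨∇c_i(x),d⟩)
    (l : EuclideanSpace ℝ (Fin n) → ℝ)
    (hl : ∀ d, l d = ρ * inner ℝ (gradient f x) d +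
      (∑ i ∈ E, |c i x + inner ℝ (gradient (c i) x) d| +
       ∑ i ∈ I, max (c i x + inner ℝ (gradient (c i) x) d) 0))
    -- v(x) = 0
    (hvx : ∑ i ∈ E, |c i x| + ∑ i ∈ I, max (c i x) 0 = 0)
    -- d*(ρ,x): a minimizer of l(·;ρ,x) over the trust region
    (dstar : EuclideanSpace ℝ (Fin n)) (hdX : N dstar ≤ δ)
    (hmin : ∀ d, N d ≤ δ → l dstar ≤ l d)
    -- Δl(d*(ρ,x);ρ,x) = l(0;ρ,x) − l(d*(ρ,x);ρ,x) = 0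
    (hΔ : l 0 - l dstar = 0) :
    -- x is a KKT point with multipliers λ_i/ρ for some λ_i ∈ ∂v_i(c_i(x))
    ∃ lam : ι → ℝ,
      (∀ i ∈ E, lam i ∈ subAbs (c i x)) ∧ (∀ i ∈ I, lam i ∈ subPos (c i x)) ∧
      gradient f x + ∑ i ∈ E ∪ I, (lam i / ρ) • gradient (c i) x = 0 ∧
      (∀ i ∈ E, c i x = 0) ∧ (∀ i ∈ I, c i x ≤ 0) ∧
      (∀ i ∈ I, 0 ≤ lam i / ρ) ∧ (∀ i ∈ I, (lam i / ρ) * c i x = 0) := by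
  classical
  set g : EuclideanSpace ℝ (Fin n) := gradient f x with hg
  set a : ι → EuclideanSpace ℝ (Fin n) := fun i => gradient (c i) x with ha
  -- Step 1: feasibility
  have hEnn : (0:ℝ) ≤ ∑ i ∈ E, |c i x| := Finset.sum_nonneg fun i _ => abs_nonneg _
  have hInn : (0:ℝ) ≤ ∑ i ∈ I, max (c i x) 0 :=
    Finset.sum_nonneg fun i _ => le_max_right _ _
  have hpair := (add_eq_zero_iff_of_nonneg hEnn hInn).mp hvx
  have hE0 : ∀ i ∈ E, c i x = 0 := by
    intro i hi
    have := (Finset.sum_eq_zero_iff_of_nonneg (fun i _ => abs_nonneg (c i x))).mp hpair.1 i hi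
    exact abs_eq_zero.mp this
  have hI0 : ∀ i ∈ I, c i x ≤ 0 := by
    intro i hi
    have := (Finset.sum_eq_zero_iff_of_nonneg
      (fun i _ => le_max_right (c i x) 0)).mp hpair.2 i hi
    by_contra h
    push_neg at h
    have : max (c i x) 0 = c i x := max_eq_left h.le
    linarith [this ▸ ‹max (c i x) 0 = 0›]
  -- Step 2: l 0 = 0, hence l d ≥ 0 on the trust region
  have hl0 : l 0 = 0 := by
    rw [hl]
    simp only [inner_zero_right, mul_zero, add_zero, zero_add]
    exact hvx
  have hlds : l dstar = 0 := by linarith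
  have hge : ∀ d, N d ≤ δ → 0 ≤ l d := fun d h => hlds ▸ hmin d h
  -- Step 3: the homogenized model is nonnegative everywhere
  have key : ∀ d : EuclideanSpace ℝ (Fin n),
      0 ≤ ρ * inner ℝ g d + (∑ i ∈ E, |(inner ℝ (a i) d : ℝ)| +
        ∑ i ∈ I, (if c i x = 0 then max (inner ℝ (a i) d : ℝ) 0 else 0)) := by
    intro d
    have hM : (0:ℝ) < N d + 1 := by linarith [hNpos d]
    have ht0 : (0:ℝ) < δ / (N d + 1) := div_pos hδ hM
    have hev1 : ∀ᶠ t in nhdsWithin (0:ℝ) (Set.Ioi 0), t < δ / (N d + 1) :=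
      (eventually_lt_nhds ht0).filter_mono nhdsWithin_le_nhds
    have hev2 : ∀ᶠ t in nhdsWithin (0:ℝ) (Set.Ioi 0),
        ∀ i ∈ I, c i x < 0 → c i x + t * inner ℝ (a i) d < 0 := by
      rw [Filter.eventually_all_finset]
      intro i hi
      by_cases hci : c i x < 0
      · have hcont : Filter.Tendsto (fun t : ℝ => c i x + t * inner ℝ (a i) d)
            (nhds 0) (nhds (c i x)) := by
          have : Filter.Tendsto (fun t : ℝ => c i x + t * inner ℝ (a i) d)
              (nhds 0) (nhds (c i x + 0 * inner ℝ (a i) d)) := by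
            exact (tendsto_const_nhds.add ((Filter.tendsto_id).mul tendsto_const_nhds))
          simpa using this
        have := hcont.eventually (eventually_lt_nhds hci)
        exact (this.filter_mono nhdsWithin_le_nhds).mono fun t ht _ => ht
      · exact Filter.Eventually.of_forall fun t h => absurd h hci
    have hev3 : ∀ᶠ t in nhdsWithin (0:ℝ) (Set.Ioi 0), (0:ℝ) < t :=
      eventually_mem_nhdsWithin
    obtain ⟨t, htlt, hti, htpos⟩ := (hev1.and (hev2.and hev3)).exists
    -- N (t • d) ≤ δ
    have hNt : N (t • d) ≤ δ := by
      rw [hNsmul, abs_of_pos htpos]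
      have h1 : t * N d ≤ t * (N d + 1) := by nlinarith
      have h2 : t * (N d + 1) ≤ (δ / (N d + 1)) * (N d + 1) := by nlinarith
      rw [div_mul_cancel₀ _ (ne_of_gt hM)] at h2
      linarith
    have h0 := hge (t • d) hNt
    rw [hl] at h0
    have hinnerg : (inner ℝ g (t • d) : ℝ) = t * inner ℝ g d := real_inner_smul_right _ _ _
    have hsumE : ∑ i ∈ E, |c i x + inner ℝ (a i) (t • d)| =
        ∑ i ∈ E, t * |(inner ℝ (a i) d : ℝ)| := by
      refine Finset.sum_congr rfl fun i hi => ?_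
      rw [hE0 i hi, real_inner_smul_right, zero_add, abs_mul, abs_of_pos htpos]
    have hsumI : ∑ i ∈ I, max (c i x + inner ℝ (a i) (t • d)) 0 =
        ∑ i ∈ I, t * (if c i x = 0 then max (inner ℝ (a i) d : ℝ) 0 else 0) := by
      refine Finset.sum_congr rfl fun i hi => ?_
      rw [real_inner_smul_right]
      rcases (hI0 i hi).lt_or_eq with hlt | heq
      · rw [if_neg (ne_of_lt hlt), mul_zero]
        exact max_eq_right (hti i hi hlt).le
      · rw [if_pos heq, heq, zero_add, mul_max_of_nonneg _ _ htpos.le, mul_zero]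
    rw [hinnerg, hsumE, hsumI, ← Finset.mul_sum, ← Finset.mul_sum] at h0
    have h0' : 0 ≤ t * (ρ * inner ℝ g d + (∑ i ∈ E, |(inner ℝ (a i) d : ℝ)| +
        ∑ i ∈ I, (if c i x = 0 then max (inner ℝ (a i) d : ℝ) 0 else 0))) := by
      ring_nf at h0 ⊢
      linarith
    exact nonneg_of_mul_nonneg_right h0' htpos
  -- Step 4: separation argument
  set A : Finset ι := E ∪ I with hA
  set Ti : ι → Set ℝ := fun i => if i ∈ E then Set.Icc (-1:ℝ) 1 else subPos (c i x) with hTi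
  have hTcomp : ∀ i : ι, IsCompact (Ti i) := by
    intro i
    simp only [hTi]
    split_ifs
    · exact isCompact_Icc
    · unfold subPos
      split_ifs
      · exact isCompact_singleton
      · exact isCompact_singleton
      · exact isCompact_Icc
  have hTconv : ∀ i : ι, Convex ℝ (Ti i) := by
    intro i
    simp only [hTi]
    split_ifs
    · exact convex_Icc _ _
    · unfold subPos
      split_ifs
      · exact convex_singleton _
      · exact convex_singleton _
      · exact convex_Icc _ _
  set S : Set ({ j // j ∈ A } → ℝ) := Set.univ.pi fun j => Ti (j : ι) with hS
  have hScomp : IsCompact S := isCompact_univ_pi fun j => hTcomp j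
  have hSconv : Convex ℝ S := convex_pi fun j _ => hTconv j
  set Φ : ({ j // j ∈ A } → ℝ) →ₗ[ℝ] EuclideanSpace ℝ (Fin n) :=
    { toFun := fun μ => ∑ j : { j // j ∈ A }, μ j • a (j : ι)
      map_add' := by
        intro μ ν
        simp [add_smul, Finset.sum_add_distrib]
      map_smul' := by
        intro r μ
        simp [Finset.smul_sum, mul_smul] } with hΦ
  have hΦcont : Continuous Φ := Φ.continuous_of_finiteDimensional
  have hKconv : Convex ℝ (Φ '' S) := hSconv.linear_image Φ
  have hKclosed : IsClosed (Φ '' S) := (hScomp.image hΦcont).isClosed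
  -- the key membership
  have hmem : (-ρ) • g ∈ Φ '' S := by
    by_contra hnot
    obtain ⟨F, u, hFx, hFs⟩ := geometric_hahn_banach_point_closed hKconv hKclosed hnot
    set w := (InnerProductSpace.toDual ℝ (EuclideanSpace ℝ (Fin n))).symm F with hw
    have hwF : ∀ y, (inner ℝ w y : ℝ) = F y := fun y => InnerProductSpace.toDual_symm_apply
    -- minimizing multipliers
    set ν : ι → ℝ := fun i =>
      if i ∈ E then (if 0 ≤ F (a i) then (-1:ℝ) else 1)
      else if c i x = 0 then (if F (a i) ≤ 0 then (1:ℝ) else 0) else 0 with hν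
    have hνmem : ∀ i ∈ A, ν i ∈ Ti i := by
      intro i hiA
      simp only [hν, hTi]
      by_cases hiE : i ∈ E
      · rw [if_pos hiE, if_pos hiE]
        split_ifs
        · constructor <;> norm_num
        · constructor <;> norm_num
      · rw [if_neg hiE, if_neg hiE]
        unfold subPos
        by_cases hci : c i x = 0
        · rw [if_pos hci, if_neg (by rw [hci]; exact lt_irrefl 0),
            if_neg (by rw [hci]; exact lt_irrefl 0)]
          split_ifs
          · constructor <;> norm_num
          · constructor <;> norm_num
        · have hiI : i ∈ I := (Finset.mem_union.mp hiA).resolve_left hiE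
          have hlt : c i x < 0 := (hI0 i hiI).lt_of_ne hci
          rw [if_neg (by linarith), if_pos hlt, if_neg hci]
          rfl
    set μ : { j // j ∈ A } → ℝ := fun j => ν (j : ι) with hμ
    have hμS : μ ∈ S := fun j _ => hνmem (j : ι) j.2
    have hΦμ : Φ μ = ∑ i ∈ A, ν i • a i := by
      simp only [hΦ, hμ, LinearMap.coe_mk, AddHom.coe_mk]
      exact Finset.sum_attach A fun i => ν i • a i
    have hFΦμ : F (Φ μ) = -(∑ i ∈ E, |F (a i)| +
        ∑ i ∈ I, (if c i x = 0 then max (-F (a i)) 0 else 0)) := by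
      rw [hΦμ, map_sum]
      have : ∀ i ∈ A, F (ν i • a i) = ν i * F (a i) := by
        intro i _
        rw [map_smul, smul_eq_mul]
      rw [Finset.sum_congr rfl this, Finset.sum_union hEI]
      have hEpart : ∑ i ∈ E, ν i * F (a i) = ∑ i ∈ E, -|F (a i)| := by
        refine Finset.sum_congr rfl fun i hi => ?_
        simp only [hν, if_pos hi]
        rcases le_or_gt 0 (F (a i)) with h | h
        · rw [if_pos h, abs_of_nonneg h]; ring
        · rw [if_neg (not_le.mpr h), abs_of_neg h]; ring
      have hIpart : ∑ i ∈ I, ν i * F (a i) =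
          ∑ i ∈ I, -(if c i x = 0 then max (-F (a i)) 0 else 0) := by
        refine Finset.sum_congr rfl fun i hi => ?_
        have hiE : i ∉ E := Finset.disjoint_left.mp hEI.symm hi
        simp only [hν, if_neg hiE]
        by_cases hci : c i x = 0
        · rw [if_pos hci, if_pos hci]
          rcases le_or_gt (F (a i)) 0 with h | h
          · rw [if_pos h, max_eq_left (by linarith)]; ring
          · rw [if_neg (not_le.mpr h), max_eq_right (by linarith)]; ring
        · rw [if_neg hci, if_neg hci]; ring
      rw [hEpart, hIpart, sum_neg_distrib, sum_neg_distrib, neg_add]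
    -- apply key at d = -w
    have hkey := key (-w)
    have e1 : (inner ℝ g (-w) : ℝ) = -F g := by
      rw [inner_neg_right, real_inner_comm, hwF]
    have e2 : ∀ i, (inner ℝ (a i) (-w) : ℝ) = -F (a i) := by
      intro i
      rw [inner_neg_right, real_inner_comm, hwF]
    rw [e1] at hkey
    have e3 : ∑ i ∈ E, |(inner ℝ (a i) (-w) : ℝ)| = ∑ i ∈ E, |F (a i)| := by
      refine Finset.sum_congr rfl fun i _ => ?_
      rw [e2, abs_neg]
    have e4 : ∑ i ∈ I, (if c i x = 0 then max (inner ℝ (a i) (-w) : ℝ) 0 else 0) =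
        ∑ i ∈ I, (if c i x = 0 then max (-F (a i)) 0 else 0) := by
      refine Finset.sum_congr rfl fun i _ => ?_
      rw [e2]
    rw [e3, e4] at hkey
    have hlt1 : F ((-ρ) • g) < u := hFx
    have hlt2 : u < F (Φ μ) := hFs _ ⟨μ, hμS, rfl⟩
    rw [map_smul, smul_eq_mul] at hlt1
    rw [hFΦμ] at hlt2
    linarith
  -- Step 5: extract the multipliers
  obtain ⟨μ, hμS, hΦμ⟩ := hmem
  set lam : ι → ℝ := fun i => if h : i ∈ A then μ ⟨i, h⟩ else 0 with hlam
  have hlamT : ∀ i (h : i ∈ A), lam i ∈ Ti i := by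
    intro i h
    rw [hlam]
    simp only [dif_pos h]
    exact hμS ⟨i, h⟩ (Set.mem_univ _)
  refine ⟨lam, ?_, ?_, ?_, hE0, hI0, ?_, ?_⟩
  · intro i hi
    have h : i ∈ A := Finset.mem_union_left _ hi
    have := hlamT i h
    rw [hTi] at this
    simp only [if_pos hi] at this
    unfold subAbs
    rw [hE0 i hi]
    rw [if_neg (lt_irrefl 0), if_neg (lt_irrefl 0)]
    exact this
  · intro i hi
    have h : i ∈ A := Finset.mem_union_right _ hi
    have hiE : i ∉ E := Finset.disjoint_left.mp hEI.symm hi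
    have := hlamT i h
    rw [hTi] at this
    simp only [if_neg hiE] at this
    exact this
  · -- gradient equation
    have hsum : ∑ i ∈ A, lam i • a i = (-ρ) • g := by
      rw [← hΦμ]
      simp only [hΦ, LinearMap.coe_mk, AddHom.coe_mk]
      rw [← Finset.sum_attach A fun i => lam i • a i]
      refine Finset.sum_congr rfl fun j _ => ?_
      rw [hlam]
      simp only [dif_pos j.2]
    have : ∑ i ∈ A, (lam i / ρ) • a i = ρ⁻¹ • ∑ i ∈ A, lam i • a i := by
      rw [Finset.smul_sum]
      refine Finset.sum_congr rfl fun i _ => ?_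
      rw [smul_smul, div_eq_inv_mul]
    rw [this, hsum, smul_smul]
    have : ρ⁻¹ * -ρ = -1 := by field_simp
    rw [this, neg_one_smul]
    exact add_neg_cancel g
  · intro i hi
    have h : i ∈ A := Finset.mem_union_right _ hi
    have hiE : i ∉ E := Finset.disjoint_left.mp hEI.symm hi
    have hmem := hlamT i h
    rw [hTi] at hmem
    simp only [if_neg hiE] at hmem
    have hlampos : 0 ≤ lam i := by
      unfold subPos at hmem
      split_ifs at hmem with h1 h2
      · rw [Set.mem_singleton_iff] at hmem; rw [hmem]; norm_num
      · rw [Set.mem_singleton_iff] at hmem; rw [hmem]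
      · exact hmem.1
    exact div_nonneg hlampos hρ.le
  · intro i hi
    have h : i ∈ A := Finset.mem_union_right _ hi
    have hiE : i ∉ E := Finset.disjoint_left.mp hEI.symm hi
    have hmem := hlamT i h
    rw [hTi] at hmem
    simp only [if_neg hiE] at hmem
    rcases (hI0 i hi).lt_or_eq with hlt | heq
    · unfold subPos at hmem
      rw [if_neg (by linarith), if_pos hlt, Set.mem_singleton_iff] at hmem
      rw [hmem]
      simp
    · rw [heq, mul_zero]
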